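/- Let (C, P) be a Dorroh pair of coalgebras over a field k. Then (C*, P*) is a Dorroh pair of algebras, where C* carries the convolution product (fg)(c) = Σ f(c₁)g(c₂), P* carries the convolution product from Δ_P, and the C*-bimodule actions on P* are (f·η)(p) = Σ f(p₍₋₁₎)η(p₍₀₎) and (η·f)(p) = Σ η(p₍₀₎)f(p₍₁₎) for f ∈ C*, η ∈ P*. Moreover the map F : C*⋉_d P* → (C⋉_d P)* defined by F(f,g)(c,p) = f(c) + g(p) is an algebra isomorphism onto the dual algebra of the coalgebra C⋉_d P. -/

import Mathlib

open TensorProduct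

section

variable {k : Type} [Field k] {C P : Type}
  [AddCommGroup C] [Module k C] [AddCommGroup P] [Module k P]

/-- Coassociativity of a (not necessarily counital) comultiplication. -/
def Coassoc (Δ : C →ₗ[k] C ⊗[k] C) : Prop :=
  (TensorProduct.assoc k C C C).toLinearMap ∘ₗ Δ.rTensor C ∘ₗ Δ = Δ.lTensor C ∘ₗ Δ

/-- `(C, P)` together with the comultiplications `ΔC`, `ΔP` and the coactions
`ρl : P → C ⊗ P`, `ρr : P → P ⊗ C` is a Dorroh pair of coalgebras. -/
def IsDorrohPairC (ΔC : C →ₗ[k] C ⊗[k] C) (ΔP : P →ₗ[k] P ⊗[k] P)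
    (ρl : P →ₗ[k] C ⊗[k] P) (ρr : P →ₗ[k] P ⊗[k] C) : Prop :=
  Coassoc ΔC ∧ Coassoc ΔP ∧
  ((TensorProduct.assoc k C C P).toLinearMap ∘ₗ ΔC.rTensor P ∘ₗ ρl = ρl.lTensor C ∘ₗ ρl) ∧
  (ΔC.lTensor P ∘ₗ ρr = (TensorProduct.assoc k P C C).toLinearMap ∘ₗ ρr.rTensor C ∘ₗ ρr) ∧
  (ρr.lTensor C ∘ₗ ρl = (TensorProduct.assoc k C P C).toLinearMap ∘ₗ ρl.rTensor C ∘ₗ ρr) ∧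
  (ρr.lTensor P ∘ₗ ΔP = (TensorProduct.assoc k P P C).toLinearMap ∘ₗ ΔP.rTensor C ∘ₗ ρr) ∧
  ((TensorProduct.assoc k C P P).toLinearMap ∘ₗ ρl.rTensor P ∘ₗ ΔP = ΔP.lTensor C ∘ₗ ρl) ∧
  ((TensorProduct.assoc k P C P).toLinearMap ∘ₗ ρr.rTensor P ∘ₗ ΔP = ρl.lTensor P ∘ₗ ΔP)

/-- The comultiplication of the Dorroh extension `C ⋉_d P`,
`Δ(c,p) = Σ (c₁,0)⊗(c₂,0) + Σ (p₍₋₁₎,0)⊗(0,p₍₀₎) + Σ (0,p₍₀₎)⊗(p₍₁₎,0) + Σ (0,p₁)⊗(0,p₂)`. -/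
noncomputable def dorrohComul (ΔC : C →ₗ[k] C ⊗[k] C) (ΔP : P →ₗ[k] P ⊗[k] P)
    (ρl : P →ₗ[k] C ⊗[k] P) (ρr : P →ₗ[k] P ⊗[k] C) :
    (C × P) →ₗ[k] (C × P) ⊗[k] (C × P) :=
  TensorProduct.map (LinearMap.inl k C P) (LinearMap.inl k C P) ∘ₗ ΔC ∘ₗ LinearMap.fst k C P
  + TensorProduct.map (LinearMap.inl k C P) (LinearMap.inr k C P) ∘ₗ ρl ∘ₗ LinearMap.snd k C P
  + TensorProduct.map (LinearMap.inr k C P) (LinearMap.inl k C P) ∘ₗ ρr ∘ₗ LinearMap.snd k C P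
  + TensorProduct.map (LinearMap.inr k C P) (LinearMap.inr k C P) ∘ₗ ΔP ∘ₗ LinearMap.snd k C P


/-- The convolution product on the dual space of a (not necessarily counital) coalgebra:
`(fg)(c) = Σ f(c₁) g(c₂)`. -/
noncomputable def conv {C : Type} [AddCommGroup C] [Module k C]
    (Δ : C →ₗ[k] C ⊗[k] C) (f g : Module.Dual k C) : Module.Dual k C :=
  (TensorProduct.lid k k).toLinearMap ∘ₗ TensorProduct.map f g ∘ₗ Δ

/-- The left action of `C*` on `P*`: `(f·η)(p) = Σ f(p₍₋₁₎) η(p₍₀₎)`. -/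
noncomputable def dualActL (ρl : P →ₗ[k] C ⊗[k] P)
    (f : Module.Dual k C) (η : Module.Dual k P) : Module.Dual k P :=
  (TensorProduct.lid k k).toLinearMap ∘ₗ TensorProduct.map f η ∘ₗ ρl

/-- The right action of `C*` on `P*`: `(η·f)(p) = Σ η(p₍₀₎) f(p₍₁₎)`. -/
noncomputable def dualActR (ρr : P →ₗ[k] P ⊗[k] C)
    (η : Module.Dual k P) (f : Module.Dual k C) : Module.Dual k P :=
  (TensorProduct.lid k k).toLinearMap ∘ₗ TensorProduct.map η f ∘ₗ ρr


lemma key_assoc {X A B D : Type} [AddCommGroup X] [Module k X]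
    [AddCommGroup A] [Module k A] [AddCommGroup B] [Module k B]
    [AddCommGroup D] [Module k D]
    (E : X →ₗ[k] (A ⊗[k] B) ⊗[k] D) (E' : X →ₗ[k] A ⊗[k] (B ⊗[k] D))
    (hE : (TensorProduct.assoc k A B D).toLinearMap ∘ₗ E = E')
    (f : Module.Dual k A) (g : Module.Dual k B) (hh : Module.Dual k D) :
    (TensorProduct.lid k k).toLinearMap ∘ₗ
      TensorProduct.map ((TensorProduct.lid k k).toLinearMap ∘ₗ TensorProduct.map f g) hh ∘ₗ E =
    (TensorProduct.lid k k).toLinearMap ∘ₗ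
      TensorProduct.map f ((TensorProduct.lid k k).toLinearMap ∘ₗ TensorProduct.map g hh) ∘ₗ E' := by
  subst hE
  have key : (TensorProduct.lid k k).toLinearMap ∘ₗ
      TensorProduct.map ((TensorProduct.lid k k).toLinearMap ∘ₗ TensorProduct.map f g) hh =
      ((TensorProduct.lid k k).toLinearMap ∘ₗ
      TensorProduct.map f ((TensorProduct.lid k k).toLinearMap ∘ₗ TensorProduct.map g hh)) ∘ₗ
        (TensorProduct.assoc k A B D).toLinearMap := by
    apply TensorProduct.ext
    apply TensorProduct.ext
    ext a b d
    simp [mul_assoc]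
  rw [← LinearMap.comp_assoc, ← LinearMap.comp_assoc, key]
  simp only [LinearMap.comp_assoc]

lemma map_lcomp {X Y A B D : Type} [AddCommGroup X] [Module k X]
    [AddCommGroup Y] [Module k Y] [AddCommGroup A] [Module k A]
    [AddCommGroup B] [Module k B] [AddCommGroup D] [Module k D]
    (f : Module.Dual k A) (g : Module.Dual k B) (w : Y →ₗ[k] A ⊗[k] B)
    (hh : Module.Dual k D) (δ : X →ₗ[k] Y ⊗[k] D) :
    (TensorProduct.lid k k).toLinearMap ∘ₗ
      TensorProduct.map ((TensorProduct.lid k k).toLinearMap ∘ₗ TensorProduct.map f g ∘ₗ w) hh ∘ₗ δ =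
    (TensorProduct.lid k k).toLinearMap ∘ₗ
      TensorProduct.map ((TensorProduct.lid k k).toLinearMap ∘ₗ TensorProduct.map f g) hh ∘ₗ
        (w.rTensor D ∘ₗ δ) := by
  have h1 : (TensorProduct.lid k k).toLinearMap ∘ₗ TensorProduct.map f g ∘ₗ w
      = ((TensorProduct.lid k k).toLinearMap ∘ₗ TensorProduct.map f g) ∘ₗ w :=
    (LinearMap.comp_assoc _ _ _).symm
  rw [h1, ← LinearMap.map_comp_rTensor]
  simp only [LinearMap.comp_assoc]

lemma map_rcomp {X Y A B D : Type} [AddCommGroup X] [Module k X]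
    [AddCommGroup Y] [Module k Y] [AddCommGroup A] [Module k A]
    [AddCommGroup B] [Module k B] [AddCommGroup D] [Module k D]
    (f : Module.Dual k A) (g : Module.Dual k B) (w : Y →ₗ[k] A ⊗[k] B)
    (hh : Module.Dual k D) (δ : X →ₗ[k] D ⊗[k] Y) :
    (TensorProduct.lid k k).toLinearMap ∘ₗ
      TensorProduct.map hh ((TensorProduct.lid k k).toLinearMap ∘ₗ TensorProduct.map f g ∘ₗ w) ∘ₗ δ =
    (TensorProduct.lid k k).toLinearMap ∘ₗ
      TensorProduct.map hh ((TensorProduct.lid k k).toLinearMap ∘ₗ TensorProduct.map f g) ∘ₗ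
        (w.lTensor D ∘ₗ δ) := by
  have h1 : (TensorProduct.lid k k).toLinearMap ∘ₗ TensorProduct.map f g ∘ₗ w
      = ((TensorProduct.lid k k).toLinearMap ∘ₗ TensorProduct.map f g) ∘ₗ w :=
    (LinearMap.comp_assoc _ _ _).symm
  rw [h1, ← LinearMap.map_comp_lTensor]
  simp only [LinearMap.comp_assoc]

lemma map_map_comp {X A B A' B' : Type} [AddCommGroup X] [Module k X]
    [AddCommGroup A] [Module k A] [AddCommGroup B] [Module k B]
    [AddCommGroup A'] [Module k A'] [AddCommGroup B'] [Module k B']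
    (a : Module.Dual k A) (b : Module.Dual k B)
    (i : A' →ₗ[k] A) (j : B' →ₗ[k] B) (δ : X →ₗ[k] A' ⊗[k] B') :
    TensorProduct.map a b ∘ₗ (TensorProduct.map i j ∘ₗ δ) =
      TensorProduct.map (a ∘ₗ i) (b ∘ₗ j) ∘ₗ δ := by
  rw [← LinearMap.comp_assoc, ← TensorProduct.map_comp]

/-- **Theorem 3.12(b).** If `(C, P)` is a Dorroh pair of coalgebras, then `(C*, P*)` is a
Dorroh pair of algebras (with the convolution products and the dual actions), and
`F(f,g)(c,p) = f(c) + g(p)` is an algebra isomorphism `C* ⋉_d P* ≅ (C ⋉_d P)*`. -/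
theorem dual_dorroh_pair (ΔC : C →ₗ[k] C ⊗[k] C) (ΔP : P →ₗ[k] P ⊗[k] P)
    (ρl : P →ₗ[k] C ⊗[k] P) (ρr : P →ₗ[k] P ⊗[k] C)
    (h : IsDorrohPairC ΔC ΔP ρl ρr) :
    -- `C*` and `P*` are associative algebras under convolution
    (∀ f g h' : Module.Dual k C, conv ΔC (conv ΔC f g) h' = conv ΔC f (conv ΔC g h')) ∧
    (∀ η θ ξ : Module.Dual k P, conv ΔP (conv ΔP η θ) ξ = conv ΔP η (conv ΔP θ ξ)) ∧
    -- `P*` is a `C*`-bimodule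
    (∀ (f g : Module.Dual k C) (η : Module.Dual k P),
      dualActL ρl (conv ΔC f g) η = dualActL ρl f (dualActL ρl g η)) ∧
    (∀ (η : Module.Dual k P) (f g : Module.Dual k C),
      dualActR ρr (dualActR ρr η f) g = dualActR ρr η (conv ΔC f g)) ∧
    (∀ (f : Module.Dual k C) (η : Module.Dual k P) (g : Module.Dual k C),
      dualActR ρr (dualActL ρl f η) g = dualActL ρl f (dualActR ρr η g)) ∧
    -- the actions are compatible with the multiplication of `P*`
    (∀ (f : Module.Dual k C) (η θ : Module.Dual k P),
      dualActL ρl f (conv ΔP η θ) = conv ΔP (dualActL ρl f η) θ) ∧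
    (∀ (η : Module.Dual k P) (f : Module.Dual k C) (θ : Module.Dual k P),
      conv ΔP (dualActR ρr η f) θ = conv ΔP η (dualActL ρl f θ)) ∧
    (∀ (η θ : Module.Dual k P) (f : Module.Dual k C),
      dualActR ρr (conv ΔP η θ) f = conv ΔP η (dualActR ρr θ f)) ∧
    -- `F` is an algebra isomorphism `C* ⋉_d P* ≅ (C ⋉_d P)*`
    Function.Bijective
      ((LinearMap.fst k C P).dualMap.coprod (LinearMap.snd k C P).dualMap) ∧
    ∀ u v : Module.Dual k C × Module.Dual k P,
      ((LinearMap.fst k C P).dualMap.coprod (LinearMap.snd k C P).dualMap)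
        (conv ΔC u.1 v.1,
          dualActL ρl u.1 v.2 + dualActR ρr u.2 v.1 + conv ΔP u.2 v.2) =
      conv (dorrohComul ΔC ΔP ρl ρr)
        (((LinearMap.fst k C P).dualMap.coprod (LinearMap.snd k C P).dualMap) u)
        (((LinearMap.fst k C P).dualMap.coprod (LinearMap.snd k C P).dualMap) v) := by
  obtain ⟨h1, h2, h3, h4, h5, h6, h7, h8⟩ := h
  refine ⟨?_, ?_, ?_, ?_, ?_, ?_, ?_, ?_, ?_, ?_⟩
  · intro f g h'
    simp only [conv]
    rw [map_lcomp, map_rcomp]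
    exact key_assoc _ _ h1 f g h'
  · intro η θ ξ
    simp only [conv]
    rw [map_lcomp, map_rcomp]
    exact key_assoc _ _ h2 η θ ξ
  · intro f g η
    simp only [conv, dualActL]
    rw [map_lcomp, map_rcomp]
    exact key_assoc _ _ h3 f g η
  · intro η f g
    simp only [conv, dualActR]
    rw [map_lcomp, map_rcomp]
    exact key_assoc _ _ h4.symm η f g
  · intro f η g
    simp only [dualActL, dualActR]
    rw [map_lcomp, map_rcomp]
    exact key_assoc _ _ h5.symm f η g
  · intro f η θ
    simp only [conv, dualActL]
    rw [map_lcomp, map_rcomp]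
    exact (key_assoc _ _ h7 f η θ).symm
  · intro η f θ
    simp only [conv, dualActL, dualActR]
    rw [map_lcomp, map_rcomp]
    exact key_assoc _ _ h8 η f θ
  · intro η θ f
    simp only [conv, dualActR]
    rw [map_lcomp, map_rcomp]
    exact key_assoc _ _ h6.symm η θ f
  · refine Function.bijective_iff_has_inverse.mpr
      ⟨fun ℓ => (ℓ ∘ₗ LinearMap.inl k C P, ℓ ∘ₗ LinearMap.inr k C P), ?_, ?_⟩
    · intro u
      refine Prod.ext ?_ ?_ <;> · ext x; simp
    · intro ℓ
      ext x
      · simp; exact map_zero ℓ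
      · simp; exact map_zero ℓ
  · intro u v
    set F := (LinearMap.fst k C P).dualMap.coprod (LinearMap.snd k C P).dualMap with hF
    have hFinl : ∀ w : Module.Dual k C × Module.Dual k P,
        F w ∘ₗ LinearMap.inl k C P = w.1 := by
      intro w; ext c; simp [hF]
    have hFinr : ∀ w : Module.Dual k C × Module.Dual k P,
        F w ∘ₗ LinearMap.inr k C P = w.2 := by
      intro w; ext p; simp [hF]
    have hFap : ∀ w : Module.Dual k C × Module.Dual k P,
        F w = w.1 ∘ₗ LinearMap.fst k C P + w.2 ∘ₗ LinearMap.snd k C P := by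
      intro w; ext x <;> simp [hF]
    have hR : conv (dorrohComul ΔC ΔP ρl ρr) (F u) (F v)
        = (conv ΔC u.1 v.1) ∘ₗ LinearMap.fst k C P
          + ((dualActL ρl u.1 v.2) ∘ₗ LinearMap.snd k C P
          + ((dualActR ρr u.2 v.1) ∘ₗ LinearMap.snd k C P
          + (conv ΔP u.2 v.2) ∘ₗ LinearMap.snd k C P)) := by
      simp only [conv, dualActL, dualActR, dorrohComul, LinearMap.comp_add, LinearMap.add_comp,
        LinearMap.comp_assoc, map_map_comp, hFinl, hFinr]
      abel
    rw [hR, hFap]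
    simp only [LinearMap.add_comp]
    abel

end
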